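/- If S is a gated subgraph of a partial cube G, then the contraction π_f(S) is a gated subgraph of π_f(G). -/

import Mathlib

/-- The hypercube graph on `Λ → Bool`: two vertices are adjacent iff they differ
in exactly one coordinate. -/
def Qcube (Λ : Type*) : SimpleGraph (Λ → Bool) where
  Adj x y := ∃ f, x f ≠ y f ∧ ∀ g, g ≠ f → x g = y g
  symm := by
    refine ⟨?_⟩
    rintro x y ⟨f, hf, h⟩
    exact ⟨f, Ne.symm hf, fun g hg => (h g hg).symm⟩
  loopless := by
    refine ⟨?_⟩
    rintro x ⟨f, hf, _⟩
    exact hf rfl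

variable {Λ : Type*}

/-- The graph induced by the hypercube on a set `V` of vertices. -/
def pcGraph (V : Set (Λ → Bool)) : SimpleGraph V := (Qcube Λ).induce V

/-- `V` determines a partial cube: the induced graph is connected and its
graph distance coincides with the Hamming distance. -/
def IsPartialCube (V : Set (Λ → Bool)) : Prop :=
  (pcGraph V).Connected ∧
    ∀ x y : V, (pcGraph V).dist x y = Set.ncard {f | (x : Λ → Bool) f ≠ (y : Λ → Bool) f}

/-- `W` is a convex subgraph of the partial cube on `V`. -/
def ConvexIn (V W : Set (Λ → Bool)) : Prop :=
  W ⊆ V ∧ ∀ u v w : V, (u : Λ → Bool) ∈ W → (v : Λ → Bool) ∈ W →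
    (pcGraph V).dist u w + (pcGraph V).dist w v = (pcGraph V).dist u v →
      (w : Λ → Bool) ∈ W

/-- `W` is a gated subgraph of the partial cube on `V`: every vertex has a gate in `W`. -/
def GatedIn (V W : Set (Λ → Bool)) : Prop :=
  W ⊆ V ∧ ∀ x : V, ∃ g : V, (g : Λ → Bool) ∈ W ∧
    ∀ y : V, (y : Λ → Bool) ∈ W →
      (pcGraph V).dist x y = (pcGraph V).dist x g + (pcGraph V).dist g y

/-- The convex hull of a set `A` inside the partial cube on `V`. -/
def convexHullIn (V A : Set (Λ → Bool)) : Set (Λ → Bool) :=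
  ⋂₀ {W | ConvexIn V W ∧ A ⊆ W}

/-- The gated hull of a set `A` inside the partial cube on `V`. -/
def gatedHullIn (V A : Set (Λ → Bool)) : Set (Λ → Bool) :=
  ⋂₀ {W | GatedIn V W ∧ A ⊆ W}

/-- The interval between `u` and `v` in the partial cube on `V`. -/
def intervalIn (V : Set (Λ → Bool)) (u v : V) : Set V :=
  {w | (pcGraph V).dist u w + (pcGraph V).dist w v = (pcGraph V).dist u v}

/-- Contraction of the Θ-class of coordinate `f`: delete coordinate `f`. -/
def contr (f : Λ) (x : Λ → Bool) : {g : Λ // g ≠ f} → Bool := fun g => x g.1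

/-- Contraction of a whole set of coordinates `B`. -/
def proj (B : Set Λ) (x : Λ → Bool) : {g : Λ // g ∉ B} → Bool := fun g => x g.1

/-- The Θ-class `E_f` crosses `S`: `S` meets both halfspaces of coordinate `f`. -/
def Crosses (f : Λ) (S : Set (Λ → Bool)) : Prop :=
  (∃ x ∈ S, x f = true) ∧ (∃ x ∈ S, x f = false)

/-- The Θ-class `E_f` (of edges of the graph on `V`) is disjoint from `S`:
no edge in class `f` has an endpoint in `S`. -/
def DisjointFrom (f : Λ) (V S : Set (Λ → Bool)) : Prop :=
  ∀ x ∈ V, ∀ y ∈ V, (Qcube Λ).Adj x y → x f ≠ y f → x ∉ S ∧ y ∉ S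

/-- Adjacency in a cycle on `ZMod n` (for `n = 2` this is `K₂`). -/
def cycleAdj (n : ℕ) (x y : ZMod n) : Prop := x ≠ y ∧ (y = x + 1 ∨ x = y + 1)

/-- The cycle graph on `ZMod n`. -/
def cycGraph (n : ℕ) : SimpleGraph (ZMod n) where
  Adj x y := cycleAdj n x y
  symm := by
    refine ⟨?_⟩
    rintro x y ⟨h1, h2⟩
    exact ⟨Ne.symm h1, h2.symm⟩
  loopless := by
    refine ⟨?_⟩
    rintro x ⟨h1, _⟩
    exact h1 rfl

/-- The Cartesian product of the cycles/edges `ZMod (F i)`. -/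
def edgeCycleProd {m : ℕ} (F : Fin m → ℕ) : SimpleGraph (∀ i, ZMod (F i)) where
  Adj x y := ∃ i, cycleAdj (F i) (x i) (y i) ∧ ∀ j, j ≠ i → x j = y j
  symm := by
    refine ⟨?_⟩
    rintro x y ⟨i, ⟨h1, h2⟩, h3⟩
    exact ⟨i, ⟨Ne.symm h1, h2.symm⟩, fun j hj => (h3 j hj).symm⟩
  loopless := by
    refine ⟨?_⟩
    rintro x ⟨i, ⟨h1, _⟩, _⟩
    exact h1 rfl

/-- A graph is (isomorphic to) a Cartesian product of edges and even cycles. -/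
def IsEdgeCycleProduct {α : Type*} (H : SimpleGraph α) : Prop :=
  ∃ (m : ℕ) (F : Fin m → ℕ), (∀ i, Even (F i) ∧ 2 ≤ F i) ∧
    Nonempty (H ≃g edgeCycleProd F)

/-- The vertex set of `Q₃⁻`, the 3-cube minus one vertex. -/
def Q3minusSet : Set (Fin 3 → Bool) := {x : Fin 3 → Bool | x ≠ fun _ => true}

/-- A partial cube is hypercellular if no pc-minor of it (a contraction of a
convex subgraph, i.e. of a restriction) is isomorphic to `Q₃⁻`. -/
def Hypercellular (V : Set (Λ → Bool)) : Prop :=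
  IsPartialCube V ∧ ∀ (B : Set Λ) (W : Set (Λ → Bool)), ConvexIn V W →
    IsEmpty (pcGraph (proj B '' W) ≃g pcGraph Q3minusSet)

/-- A cell of the partial cube on `V`: a convex subgraph isomorphic to a
Cartesian product of edges and even cycles. -/
def IsCellIn (V X : Set (Λ → Bool)) : Prop :=
  ConvexIn V X ∧ IsEdgeCycleProduct (pcGraph X)

/-- Hamming lower bound on walk length in an induced subgraph of the cube. -/
lemma ham_le_walk_length {W : Set (Λ → Bool)} {u v : W}
    (p : (pcGraph W).Walk u v) : {g | (u : Λ → Bool) g ≠ (v : Λ → Bool) g}.ncard ≤ p.length := by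
  induction p with
  | nil =>
    simp [Set.ncard_eq_zero, Set.eq_empty_iff_forall_notMem]
  | @cons a b c h q ih =>
    obtain ⟨f0, hf0, hrest⟩ := id h
    rw [SimpleGraph.Walk.length_cons]
    by_cases hfin : {g | (b : Λ → Bool) g ≠ (c : Λ → Bool) g}.Finite
    · have hsub : {g | (a : Λ → Bool) g ≠ (c : Λ → Bool) g} ⊆
          insert f0 {g | (b : Λ → Bool) g ≠ (c : Λ → Bool) g} := by
        intro g hg
        by_cases hgf : g = f0
        · exact hgf ▸ Set.mem_insert _ _
        · exact Set.mem_insert_of_mem _ (fun hbc => hg ((hrest g hgf).trans hbc))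
      calc {g | (a : Λ → Bool) g ≠ (c : Λ → Bool) g}.ncard
          ≤ (insert f0 {g | (b : Λ → Bool) g ≠ (c : Λ → Bool) g}).ncard :=
            Set.ncard_le_ncard hsub (hfin.insert f0)
        _ ≤ {g | (b : Λ → Bool) g ≠ (c : Λ → Bool) g}.ncard + 1 := Set.ncard_insert_le _ _
        _ ≤ q.length + 1 := by omega
    · have hsub : {g | (b : Λ → Bool) g ≠ (c : Λ → Bool) g} \ {f0} ⊆
          {g | (a : Λ → Bool) g ≠ (c : Λ → Bool) g} := by
        rintro g ⟨hg, hgf⟩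
        exact fun hac => hg (((hrest g hgf).symm.trans hac))
      have : ¬ {g | (a : Λ → Bool) g ≠ (c : Λ → Bool) g}.Finite := by
        intro hf
        exact hfin (((hf.subset hsub).union (Set.finite_singleton f0)).subset
          (by intro g hg; by_cases hgf : g = f0 <;> simp [hgf, Set.mem_diff, hg]))
      rw [Set.Infinite.ncard this]
      omega

/-- Walks contract to walks, losing one edge per crossing of `E_f`. -/
lemma contr_walk (V : Set (Λ → Bool)) (f : Λ) {u v : V}
    (p : (pcGraph V).Walk u v) :
    ∃ q : (pcGraph (contr f '' V)).Walk ⟨contr f u, ⟨u, u.2, rfl⟩⟩ ⟨contr f v, ⟨v, v.2, rfl⟩⟩,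
      q.length ≤ p.length ∧ ((u : Λ → Bool) f ≠ (v : Λ → Bool) f → q.length + 1 ≤ p.length) := by
  induction p with
  | nil => exact ⟨.nil, le_refl _, fun h => absurd rfl h⟩
  | @cons a b c h q ih =>
    obtain ⟨qq, hle, hcross⟩ := ih
    obtain ⟨f0, hf0, hrest⟩ := id h
    rw [SimpleGraph.Walk.length_cons]
    by_cases hff : f0 = f
    · subst hff
      have heq : (⟨contr f0 a, ⟨a, a.2, rfl⟩⟩ : (contr f0 '' V)) = ⟨contr f0 b, ⟨b, b.2, rfl⟩⟩ := by
        apply Subtype.ext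
        funext g
        exact hrest g.1 g.2
      refine ⟨qq.copy heq.symm rfl, by simp; omega, fun hav => ?_⟩
      simp only [SimpleGraph.Walk.length_copy]
      omega
    · have hadj : (pcGraph (contr f '' V)).Adj ⟨contr f a, ⟨a, a.2, rfl⟩⟩ ⟨contr f b, ⟨b, b.2, rfl⟩⟩ := by
        refine ⟨⟨f0, hff⟩, hf0, ?_⟩
        rintro ⟨g, hg⟩ hgne
        exact hrest g (fun h => hgne (by simp [h]))
      refine ⟨.cons hadj qq, by simp; omega, fun hav => ?_⟩
      have haf : (a : Λ → Bool) f = (b : Λ → Bool) f := hrest f (fun h => hff h.symm)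
      have : (b : Λ → Bool) f ≠ (c : Λ → Bool) f := fun h => hav (haf.trans h)
      have := hcross this
      simp only [SimpleGraph.Walk.length_cons]
      omega

lemma diff_finite {V : Set (Λ → Bool)} (hV : IsPartialCube V) (a b : V) :
    {g | (a : Λ → Bool) g ≠ (b : Λ → Bool) g}.Finite := by
  rw [← Set.not_infinite]
  intro h
  have h0 := hV.2 a b
  rw [Set.Infinite.ncard h] at h0
  have hab := (hV.1.dist_eq_zero_iff).mp h0
  subst hab
  exact h.nonempty.elim (fun g hg => hg rfl)

lemma ncard_contr_diff (f : Λ) (a b : Λ → Bool) :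
    {g : {h : Λ // h ≠ f} | contr f a g ≠ contr f b g}.ncard
      = ({g | a g ≠ b g} \ {f}).ncard := by
  have himg : Subtype.val '' {g : {h : Λ // h ≠ f} | contr f a g ≠ contr f b g}
      = {g | a g ≠ b g} \ {f} := by
    ext g
    simp only [Set.mem_image, Set.mem_setOf_eq, Set.mem_diff, Set.mem_singleton_iff, contr]
    constructor
    · rintro ⟨⟨g', hg'⟩, hne, rfl⟩; exact ⟨hne, hg'⟩
    · rintro ⟨hne, hg⟩; exact ⟨⟨g, hg⟩, hne, rfl⟩
  rw [← himg, Set.ncard_image_of_injective _ Subtype.val_injective]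

lemma contr_dist (V : Set (Λ → Bool)) (hV : IsPartialCube V) (f : Λ)
    (x y : ↥(contr f '' V)) :
    (pcGraph (contr f '' V)).dist x y
      = {g | (x : {h : Λ // h ≠ f} → Bool) g ≠ (y : {h : Λ // h ≠ f} → Bool) g}.ncard := by
  obtain ⟨a, haV, hax⟩ := x.2
  obtain ⟨b, hbV, hby⟩ := y.2
  have hx : x = ⟨contr f a, ⟨a, haV, rfl⟩⟩ := Subtype.ext hax.symm
  have hy : y = ⟨contr f b, ⟨b, hbV, rfl⟩⟩ := Subtype.ext hby.symm
  subst hx hy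
  set A : ↥V := ⟨a, haV⟩ with hA
  set B : ↥V := ⟨b, hbV⟩ with hB
  have hd : (pcGraph V).dist A B = {g | a g ≠ b g}.ncard := hV.2 A B
  have hfin : {g | a g ≠ b g}.Finite := diff_finite hV A B
  obtain ⟨p, hp⟩ := (hV.1 A B).exists_walk_length_eq_dist
  obtain ⟨q, hqle, hqcross⟩ := contr_walk V f p
  have hncard : {g : {h : Λ // h ≠ f} | contr f a g ≠ contr f b g}.ncard
      = ({g | a g ≠ b g} \ {f}).ncard := ncard_contr_diff f a b
  -- lower bound
  have hreach : (pcGraph (contr f '' V)).Reachable ⟨contr f a, ⟨a, haV, rfl⟩⟩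
      ⟨contr f b, ⟨b, hbV, rfl⟩⟩ := ⟨q⟩
  obtain ⟨r, hr⟩ := hreach.exists_walk_length_eq_dist
  have hlow := ham_le_walk_length r
  rw [hr] at hlow
  -- upper bound
  have hup : (pcGraph (contr f '' V)).dist ⟨contr f a, ⟨a, haV, rfl⟩⟩ ⟨contr f b, ⟨b, hbV, rfl⟩⟩
      ≤ ({g | a g ≠ b g} \ {f}).ncard := by
    by_cases hab : a f = b f
    · have hfD : f ∉ {g | a g ≠ b g} := fun h => h hab
      rw [Set.diff_singleton_eq_self hfD]
      calc (pcGraph (contr f '' V)).dist _ _ ≤ q.length := SimpleGraph.dist_le q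
        _ ≤ p.length := hqle
        _ = _ := by rw [hp, hd]
    · have hfD : f ∈ {g | a g ≠ b g} := hab
      have h1 : (pcGraph (contr f '' V)).dist ⟨contr f a, ⟨a, haV, rfl⟩⟩
          ⟨contr f b, ⟨b, hbV, rfl⟩⟩ + 1 ≤ {g | a g ≠ b g}.ncard := by
        calc _ ≤ q.length + 1 := Nat.add_le_add_right (SimpleGraph.dist_le q) 1
          _ ≤ p.length := hqcross hab
          _ = _ := by rw [hp, hd]
      rw [Set.ncard_diff_singleton_of_mem hfD]
      omega
  simp only [hncard] at hlow ⊢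
  omega

/-- If `S` is a gated subgraph of the partial cube on `V`, then `π_f(S)` is a
gated subgraph of `π_f(G)`. -/
theorem stmt11 (V S : Set (Λ → Bool)) (hV : IsPartialCube V) (hS : GatedIn V S)
    (f : Λ) : GatedIn (contr f '' V) (contr f '' S) := by
  refine ⟨Set.image_mono hS.1, ?_⟩
  rintro ⟨x', hx'⟩
  obtain ⟨x, hxV, rfl⟩ := hx'
  obtain ⟨g, hgS, hgate⟩ := hS.2 ⟨x, hxV⟩
  refine ⟨⟨contr f g, ⟨g, g.2, rfl⟩⟩, ⟨g, hgS, rfl⟩, ?_⟩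
  rintro ⟨y', hy'V⟩ hyS
  obtain ⟨y, hyS', hyy⟩ := hyS
  have hyV : y ∈ V := hS.1 hyS'
  have hy' : (⟨y', hy'V⟩ : ↥(contr f '' V)) = ⟨contr f y, ⟨y, hyV, rfl⟩⟩ := Subtype.ext hyy.symm
  rw [hy']
  simp only [contr_dist V hV f, ncard_contr_diff]
  -- Hamming identity
  set D1 : Set Λ := {h | x h ≠ (g : Λ → Bool) h} with hD1
  set D2 : Set Λ := {h | (g : Λ → Bool) h ≠ y h} with hD2
  set D3 : Set Λ := {h | x h ≠ y h} with hD3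
  have hfin1 : D1.Finite := diff_finite hV ⟨x, hxV⟩ g
  have hfin2 : D2.Finite := diff_finite hV g ⟨y, hyV⟩
  have hfin3 : D3.Finite := diff_finite hV ⟨x, hxV⟩ ⟨y, hyV⟩
  have hsum : D3.ncard = D1.ncard + D2.ncard := by
    have := hgate ⟨y, hyV⟩ hyS'
    rwa [hV.2, hV.2, hV.2] at this
  have hsub : D3 ⊆ D1 ∪ D2 := by
    intro h hh
    by_cases h1 : x h = (g : Λ → Bool) h
    · exact Or.inr (fun h2 => hh (h1.trans h2))
    · exact Or.inl h1
  have hUle : (D1 ∪ D2).ncard ≤ D1.ncard + D2.ncard := Set.ncard_union_le D1 D2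
  have hEq : D3 = D1 ∪ D2 :=
    Set.eq_of_subset_of_ncard_le hsub (by omega) (hfin1.union hfin2)
  have hIE := Set.ncard_union_add_ncard_inter D1 D2 hfin1 hfin2
  have hUeq : (D1 ∪ D2).ncard = D3.ncard := by rw [hEq]
  have hint0 : (D1 ∩ D2).ncard = 0 := by omega
  have hint : D1 ∩ D2 = ∅ := by
    rw [Set.ncard_eq_zero (hfin1.inter_of_left D2)] at hint0
    exact hint0
  have hdisj : Disjoint D1 D2 := Set.disjoint_iff_inter_eq_empty.mpr hint
  have hEqd : D3 \ {f} = (D1 \ {f}) ∪ (D2 \ {f}) := by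
    rw [hEq, Set.union_diff_distrib]
  rw [hEqd, Set.ncard_union_eq (hdisj.mono (Set.diff_subset) (Set.diff_subset))
    hfin1.diff hfin2.diff]
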